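/- For every α ∈ ℝ with |α| ≠ 1, the improper integral ∫₀^∞ (sin ρ/ρ³ − cos ρ/ρ²) cos(αρ) dρ converges and equals (π/4)(1 − α²) if |α| < 1, and equals 0 if |α| > 1. -/

import Mathlib

open MeasureTheory Real Filter

noncomputable section

namespace SinCosKernelAux

open FourierTransform Set Complex


def g (c : ℝ) : ℝ := Real.sin c / c ^ 3 - Real.cos c / c ^ 2

lemma g_even (c : ℝ) : g (-c) = g c := by
  simp only [g, Real.sin_neg, Real.cos_neg]
  ring

lemma abs_sin_sub_le {x : ℝ} (hx : |x| ≤ 1) : |Real.sin x - x| ≤ |x| ^ 3 / 4 := by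
  have key : ∀ y : ℝ, 0 < y → y ≤ 1 → |Real.sin y - y| ≤ |y| ^ 3 / 4 := by
    intro y hy hy1
    have h1 := Real.sin_lt hy
    have h2 := Real.sin_gt_sub_cube hy
    rw [_root_.abs_of_pos hy, abs_of_nonpos (by linarith)]
    linarith
  rcases lt_trichotomy x 0 with hx0 | hx0 | hx0
  · have h := key (-x) (by linarith) (by rwa [_root_.abs_of_neg hx0] at hx)
    rw [Real.sin_neg] at h
    have e1 : |-Real.sin x - -x| = |Real.sin x - x| := by rw [← _root_.abs_neg]; ring_nf
    have e2 : |(-x)| = |x| := _root_.abs_neg x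
    rw [e1, e2] at h
    exact h
  · simp [hx0]
  · exact key x hx0 (by rwa [_root_.abs_of_pos hx0] at hx)

lemma one_sub_cos_le (x : ℝ) : |1 - Real.cos x| ≤ x ^ 2 / 2 := by
  have h1 : Real.cos x ≤ 1 := Real.cos_le_one x
  have h2 : 1 - x ^ 2 / 2 ≤ Real.cos x := Real.one_sub_sq_div_two_le_cos
  rw [_root_.abs_of_nonneg (by linarith)]
  linarith

lemma gbound (c : ℝ) : |g c| ≤ 4 / (1 + c ^ 2) := by
  rcases le_or_gt 1 (|c|) with h1 | h1
  · have hc2 : (1:ℝ) ≤ c ^ 2 := by nlinarith [_root_.sq_abs c]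
    have hc0 : (0:ℝ) < c ^ 2 := by linarith
    have hc3 : (1:ℝ) ≤ |c| ^ 3 := one_le_pow₀ h1
    have e1 : |Real.sin c / c ^ 3| ≤ 1 / c ^ 2 := by
      rw [_root_.abs_div, _root_.abs_pow]
      calc |Real.sin c| / |c| ^ 3 ≤ 1 / |c| ^ 3 := by
            gcongr
            exact Real.abs_sin_le_one c
      _ ≤ 1 / c ^ 2 := one_div_le_one_div_of_le hc0 (by nlinarith [_root_.sq_abs c, _root_.abs_nonneg c])
    have e2 : |Real.cos c / c ^ 2| ≤ 1 / c ^ 2 := by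
      rw [_root_.abs_div, _root_.abs_pow, ← _root_.sq_abs c]
      gcongr
      exact Real.abs_cos_le_one c
    have e3 : |g c| ≤ 2 / c ^ 2 := by
      calc |g c| ≤ |Real.sin c / c ^ 3| + |Real.cos c / c ^ 2| := _root_.abs_sub _ _
      _ ≤ 1 / c ^ 2 + 1 / c ^ 2 := add_le_add e1 e2
      _ = 2 / c ^ 2 := by ring
    refine e3.trans ?_
    rw [div_le_div_iff₀ hc0 (by positivity)]
    nlinarith
  · rcases eq_or_ne c 0 with rfl | hc0
    · norm_num [g]
    · have habs : (0:ℝ) < |c| := abs_pos.mpr hc0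
      have hrw : g c = (Real.sin c - c * Real.cos c) / c ^ 3 := by
        unfold g
        field_simp
      have hb : |Real.sin c - c * Real.cos c| ≤ 3 / 4 * |c| ^ 3 := by
        have t1 : |Real.sin c - c| ≤ |c| ^ 3 / 4 := abs_sin_sub_le h1.le
        have t2 : |c - c * Real.cos c| ≤ |c| ^ 3 / 2 := by
          have : c - c * Real.cos c = c * (1 - Real.cos c) := by ring
          rw [this, _root_.abs_mul]
          calc |c| * |1 - Real.cos c| ≤ |c| * (c ^ 2 / 2) := by
                gcongr; exact one_sub_cos_le c
          _ = |c| ^ 3 / 2 := by rw [← _root_.sq_abs]; ring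
        calc |Real.sin c - c * Real.cos c| = |(Real.sin c - c) + (c - c * Real.cos c)| := by ring_nf
        _ ≤ |Real.sin c - c| + |c - c * Real.cos c| := abs_add_le _ _
        _ ≤ 3 / 4 * |c| ^ 3 := by linarith
      have : |g c| ≤ 3 / 4 := by
        rw [hrw, _root_.abs_div, _root_.abs_pow]
        rw [div_le_iff₀ (by positivity)]
        linarith
      refine this.trans ?_
      have hc2 : c ^ 2 < 1 := by nlinarith [_root_.sq_abs c, _root_.abs_nonneg c]
      rw [le_div_iff₀ (by positivity)]
      nlinarith


/-- The hat function whose Fourier transform is (proportional to) the kernel. -/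
def h (t : ℝ) : ℂ := ((max 0 (1 - t ^ 2) : ℝ) : ℂ)

lemma h_cont : Continuous h := by
  unfold h
  fun_prop

lemma h_zero {t : ℝ} (ht : 1 < |t|) : h t = 0 := by
  have : 1 - t ^ 2 < 0 := by nlinarith [_root_.sq_abs t, _root_.abs_nonneg t]
  simp [h, max_eq_left this.le]

lemma h_compactSupport : HasCompactSupport h := by
  apply HasCompactSupport.intro (isCompact_Icc (a := (-1:ℝ)) (b := 1))
  intro x hx
  apply h_zero
  simp only [mem_Icc, not_and_or, not_le] at hx
  rcases hx with hx | hx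
  · rw [_root_.abs_of_neg (by linarith)]; linarith
  · rw [_root_.abs_of_pos (by linarith)]; linarith

lemma h_integrable : Integrable h := h_cont.integrable_of_hasCompactSupport h_compactSupport

/-- Complex primitive of `t ↦ exp(-i c t) (1 - t²)`. -/
def P (c t : ℝ) : ℂ :=
  Complex.exp ((-(c * t) : ℝ) * I) *
    (I * (2 + (c:ℂ) ^ 2) / (c:ℂ) ^ 3 + (-2 / (c:ℂ) ^ 2) * (t:ℂ) + (-I / (c:ℂ)) * (t:ℂ) ^ 2)

lemma P_deriv {c : ℝ} (hc : c ≠ 0) (t : ℝ) :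
    HasDerivAt (P c) (Complex.exp ((-(c * t) : ℝ) * I) * (1 - (t:ℂ) ^ 2)) t := by
  have hcC : (c : ℂ) ≠ 0 := by exact_mod_cast hc
  set A : ℂ := I * (2 + (c:ℂ) ^ 2) / (c:ℂ) ^ 3 with hA
  set B : ℂ := -2 / (c:ℂ) ^ 2 with hB
  set C : ℂ := -I / (c:ℂ) with hC
  have hinner : HasDerivAt (fun t : ℝ => ((-(c * t) : ℝ) : ℂ) * I) (-(c:ℂ) * I) t := by
    have h1 : HasDerivAt (fun t : ℝ => -(c * t)) (-c) t := by
      simpa using ((hasDerivAt_id t).const_mul c).fun_neg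
    simpa using (h1.ofReal_comp).mul_const I
  have hexp : HasDerivAt (fun t : ℝ => Complex.exp ((-(c * t) : ℝ) * I))
      (Complex.exp ((-(c * t) : ℝ) * I) * (-(c:ℂ) * I)) t := hinner.cexp
  have hofreal : HasDerivAt (fun t : ℝ => (t : ℂ)) 1 t := (hasDerivAt_id t).ofReal_comp
  have hsq : HasDerivAt (fun t : ℝ => ((t:ℂ)) ^ 2) (2 * (t:ℂ)) t := by
    have := hofreal.fun_mul hofreal
    simpa [pow_two, two_mul] using this
  have hpoly : HasDerivAt (fun t : ℝ => A + B * (t:ℂ) + C * (t:ℂ) ^ 2)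
      (B + C * (2 * (t:ℂ))) t := by
    have := ((hasDerivAt_const t A).fun_add (hofreal.const_mul B)).fun_add (hsq.const_mul C)
    simpa using this
  have alg : (-(c:ℂ) * I) * (A + B * (t:ℂ) + C * (t:ℂ) ^ 2) + (B + C * (2 * (t:ℂ)))
      = 1 - (t:ℂ) ^ 2 := by
    rw [hA, hB, hC]
    field_simp [hcC]
    ring_nf
    simp only [Complex.I_sq]
    ring
  have hmul := hexp.fun_mul hpoly
  rw [mul_assoc, ← mul_add, alg] at hmul
  exact hmul

lemma fourier_h {ρ : ℝ} (hρ : ρ ≠ 0) : 𝓕 h ρ = ((4 * g (2 * π * ρ) : ℝ) : ℂ) := by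
  have hcne : 2 * π * ρ ≠ 0 := by
    have h1 : π ≠ 0 := Real.pi_ne_zero
    positivity
  have hcC : ((2 * π * ρ : ℝ) : ℂ) ≠ 0 := by exact_mod_cast hcne
  rw [Real.fourier_real_eq_integral_exp_smul]
  have hsupp : ∀ v ∉ Icc (-1:ℝ) 1,
      Complex.exp ((-2 * π * v * ρ : ℝ) * I) • h v = 0 := by
    intro v hv
    have : 1 < |v| := by
      simp only [mem_Icc, not_and_or, not_le] at hv
      rcases hv with hv | hv
      · rw [_root_.abs_of_neg (by linarith)]; linarith
      · rw [_root_.abs_of_pos (by linarith)]; linarith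
    rw [h_zero this, smul_zero]
  rw [← setIntegral_eq_integral_of_forall_compl_eq_zero hsupp]
  rw [integral_Icc_eq_integral_Ioc,
    ← intervalIntegral.integral_of_le (by norm_num : (-1:ℝ) ≤ 1)]
  have hcongr : EqOn (fun v : ℝ => Complex.exp ((-2 * π * v * ρ : ℝ) * I) • h v)
      (fun t : ℝ => Complex.exp ((-(2 * π * ρ * t) : ℝ) * I) * (1 - (t:ℂ) ^ 2))
      (uIcc (-1:ℝ) 1) := by
    intro t ht
    rw [uIcc_of_le (by norm_num : (-1:ℝ) ≤ 1), mem_Icc] at ht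
    have h1 : h t = ((1 - t ^ 2 : ℝ) : ℂ) := by
      unfold h
      congr 1
      rw [max_eq_right (by nlinarith [ht.1, ht.2])]
    simp only [h1, Complex.real_smul, smul_eq_mul]
    push_cast
    ring_nf
  rw [intervalIntegral.integral_congr hcongr]
  have hderiv : ∀ t ∈ uIcc (-1:ℝ) 1, HasDerivAt (P (2 * π * ρ))
      (Complex.exp ((-(2 * π * ρ * t) : ℝ) * I) * (1 - (t:ℂ) ^ 2)) t :=
    fun t _ => P_deriv hcne t
  have hcont : Continuous (fun t : ℝ =>
      Complex.exp ((-(2 * π * ρ * t) : ℝ) * I) * (1 - (t:ℂ) ^ 2)) := by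
    fun_prop
  rw [intervalIntegral.integral_eq_sub_of_hasDerivAt hderiv (hcont.intervalIntegrable _ _)]
  unfold P g
  set c : ℝ := 2 * π * ρ with hcdef
  rw [show (-(c * 1) : ℝ) = -c by ring, show (-(c * (-1)) : ℝ) = c by ring]
  have e1 : Complex.exp (((-c : ℝ) : ℂ) * I) = ((Real.cos c : ℝ) : ℂ) - ((Real.sin c : ℝ) : ℂ) * I := by
    rw [Complex.exp_mul_I, ← Complex.ofReal_cos, ← Complex.ofReal_sin,
      Real.cos_neg, Real.sin_neg]
    push_cast
    ring
  have e2 : Complex.exp (((c : ℝ) : ℂ) * I) = ((Real.cos c : ℝ) : ℂ) + ((Real.sin c : ℝ) : ℂ) * I := by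
    rw [Complex.exp_mul_I, ← Complex.ofReal_cos, ← Complex.ofReal_sin]
  rw [e1, e2]
  push_cast
  field_simp [hcC]
  ring_nf
  simp only [Complex.I_sq]
  ring

lemma pi_sq_ge : ∀ ρ : ℝ, ρ ^ 2 ≤ (2 * π * ρ) ^ 2 := by
  intro ρ
  have h1 : (1:ℝ) ≤ 2 * π := by nlinarith [Real.pi_gt_three]
  have h2 : (1:ℝ) ≤ (2 * π) ^ 2 := by nlinarith
  have : ρ ^ 2 ≤ (2 * π) ^ 2 * ρ ^ 2 := by nlinarith [sq_nonneg ρ]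
  calc ρ ^ 2 ≤ (2 * π) ^ 2 * ρ ^ 2 := this
  _ = (2 * π * ρ) ^ 2 := by ring

lemma fourier_h_bound {ρ : ℝ} (hρ : ρ ≠ 0) : ‖𝓕 h ρ‖ ≤ 16 * (1 + ρ ^ 2)⁻¹ := by
  rw [fourier_h hρ, Complex.norm_real, Real.norm_eq_abs, _root_.abs_mul]
  have := gbound (2 * π * ρ)
  have h2 : (0:ℝ) < 1 + ρ ^ 2 := by positivity
  have h3 : (0:ℝ) < 1 + (2 * π * ρ) ^ 2 := by positivity
  calc |(4:ℝ)| * |g (2 * π * ρ)| ≤ 4 * (4 / (1 + (2 * π * ρ) ^ 2)) := by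
        rw [_root_.abs_of_nonneg (by norm_num : (0:ℝ) ≤ 4)]
        gcongr
  _ ≤ 4 * (4 / (1 + ρ ^ 2)) := by
        have : 4 / (1 + (2 * π * ρ) ^ 2) ≤ 4 / (1 + ρ ^ 2) := by
          apply div_le_div_of_nonneg_left (by norm_num) h2
          linarith [pi_sq_ge ρ]
        linarith
  _ = 16 * (1 + ρ ^ 2)⁻¹ := by rw [div_eq_mul_inv]; ring

lemma fourier_h_integrable : Integrable (𝓕 h) := by
  have hmaj : Integrable (fun ρ : ℝ => 16 * (1 + ρ ^ 2)⁻¹) :=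
    integrable_inv_one_add_sq.const_mul 16
  have hmeas : AEStronglyMeasurable (𝓕 h) volume := by
    refine Continuous.aestronglyMeasurable ?_
    apply VectorFourier.fourierIntegral_continuous Real.continuous_fourierChar
      ?_ h_integrable
    simp only [LinearMap.neg_apply, innerₗ_apply_apply, neg_neg]
    exact continuous_inner (𝕜 := ℝ) (E := ℝ)
  refine hmaj.mono' hmeas ?_
  filter_upwards [compl_mem_ae_iff.mpr (volume_singleton (a := (0:ℝ)))] with ρ hρ
  exact fourier_h_bound (by simpa using hρ)

lemma g_measurable : Measurable g := by
  unfold g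
  exact (Real.measurable_sin.div (measurable_id.pow_const 3)).sub
    (Real.measurable_cos.div (measurable_id.pow_const 2))

lemma bound4 (ρ : ℝ) : |4 * g (2 * π * ρ)| ≤ 16 * (1 + ρ ^ 2)⁻¹ := by
  have hg := gbound (2 * π * ρ)
  have h2 : (0:ℝ) < 1 + ρ ^ 2 := by positivity
  have h3 : (0:ℝ) < 1 + (2 * π * ρ) ^ 2 := by positivity
  rw [_root_.abs_mul, _root_.abs_of_nonneg (by norm_num : (0:ℝ) ≤ 4)]
  calc 4 * |g (2 * π * ρ)| ≤ 4 * (4 / (1 + (2 * π * ρ) ^ 2)) := by gcongr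
  _ ≤ 4 * (4 / (1 + ρ ^ 2)) := by
        have : 4 / (1 + (2 * π * ρ) ^ 2) ≤ 4 / (1 + ρ ^ 2) := by
          apply div_le_div_of_nonneg_left (by norm_num) h2
          linarith [pi_sq_ge ρ]
        linarith
  _ = 16 * (1 + ρ ^ 2)⁻¹ := by rw [div_eq_mul_inv]; ring

lemma re_exp_mul (θ r : ℝ) : (Complex.exp ((θ:ℝ) * I) * ((r:ℝ):ℂ)).re = Real.cos θ * r := by
  rw [Complex.exp_mul_I, ← Complex.ofReal_cos, ← Complex.ofReal_sin]
  simp [_root_.add_mul, Complex.cos_ofReal_re]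

lemma key (α : ℝ) :
    ∫ ρ in Ioi (0:ℝ), g ρ * Real.cos (α * ρ) = π / 4 * max 0 (1 - α ^ 2) := by
  have hπ : (0:ℝ) < π := Real.pi_pos
  have hinv : 𝓕⁻ (𝓕 h) α = h α :=
    h_integrable.fourierInv_fourier_eq fourier_h_integrable (h_cont.continuousAt)
  rw [Real.fourierInv_eq'] at hinv
  -- the inner product on ℝ is multiplication
  have hinner : ∀ v : ℝ, (inner ℝ v α : ℝ) = v * α := fun v => by simp [mul_comm]
  set W : ℝ → ℂ := fun ρ => Complex.exp (((2 * π * ρ * α : ℝ) : ℂ) * I) *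
    ((4 * g (2 * π * ρ) : ℝ) : ℂ) with hW
  have hae : (fun v : ℝ => Complex.exp (((2 * π * (inner ℝ v α : ℝ) : ℝ) : ℂ) * I) • 𝓕 h v)
      =ᵐ[volume] W := by
    filter_upwards [compl_mem_ae_iff.mpr (volume_singleton (a := (0:ℝ)))] with ρ hρ
    have hρ0 : ρ ≠ 0 := by simpa using hρ
    rw [hinner, fourier_h hρ0, smul_eq_mul, hW]
    norm_num [mul_assoc]
  have hWint : Integrable W := by
    refine (integrable_inv_one_add_sq.const_mul 16).mono' ?_ ?_
    · apply AEStronglyMeasurable.mul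
      · refine Continuous.aestronglyMeasurable ?_
        fun_prop
      · exact (Complex.measurable_ofReal.comp
          ((g_measurable.comp (measurable_const_mul (2*π))).const_mul 4)).aestronglyMeasurable
    · refine ae_of_all _ fun ρ => ?_
      rw [hW]
      simp only []
      rw [norm_mul, Complex.norm_exp_ofReal_mul_I, one_mul, Complex.norm_real,
        Real.norm_eq_abs]
      exact bound4 ρ
  rw [integral_congr_ae hae] at hinv
  have hre := congrArg Complex.re hinv
  have hhα : (h α).re = max 0 (1 - α ^ 2) := by
    simp [h]
  rw [hhα, ← RCLike.re_to_complex, ← integral_re hWint] at hre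
  have hre2 : ∫ ρ : ℝ, Real.cos (2 * π * ρ * α) * (4 * g (2 * π * ρ)) = max 0 (1 - α ^ 2) := by
    rw [← hre]
    congr 1
    funext ρ
    rw [RCLike.re_to_complex, hW]
    exact (re_exp_mul _ _).symm
  -- substitution s = 2πρ
  set Φ : ℝ → ℝ := fun s => Real.cos (s * α) * (4 * g s) with hΦ
  have hsubst : ∫ ρ : ℝ, Real.cos (2 * π * ρ * α) * (4 * g (2 * π * ρ))
      = |(2 * π)⁻¹| • ∫ s : ℝ, Φ s := by
    rw [← MeasureTheory.Measure.integral_comp_mul_left Φ (2 * π)]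
  have heven : ∀ x : ℝ, Φ |x| = Φ x := by
    intro x
    rcases abs_choice x with hx | hx
    · rw [hx]
    · rw [hx, hΦ]
      simp only [neg_mul, Real.cos_neg]
      rw [show -x = -x from rfl]
      have := g_even x
      rw [show g (-x) = g x from g_even x]
  have habs : ∫ s : ℝ, Φ s = 2 * ∫ s in Ioi (0:ℝ), Φ s := by
    rw [← integral_comp_abs (f := Φ)]
    congr 1
    funext x
    rw [heven]
  have hIoi : ∫ s in Ioi (0:ℝ), Φ s = 4 * ∫ ρ in Ioi (0:ℝ), g ρ * Real.cos (α * ρ) := by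
    rw [← integral_const_mul]
    congr 1
    funext s
    rw [hΦ]
    simp only []
    rw [mul_comm s α]
    ring
  rw [hsubst, habs, hIoi] at hre2
  rw [_root_.abs_of_nonneg (by positivity : (0:ℝ) ≤ (2*π)⁻¹), smul_eq_mul] at hre2
  field_simp at hre2
  linarith

lemma integrableOn_kernel (α : ℝ) :
    IntegrableOn (fun ρ : ℝ => g ρ * Real.cos (α * ρ)) (Ioi (0:ℝ)) := by
  refine ((integrable_inv_one_add_sq.const_mul 4).restrict (s := Ioi 0)).mono' ?_ ?_
  · exact (g_measurable.mul
      (Real.measurable_cos.comp (measurable_const_mul α))).aestronglyMeasurable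
  · refine ae_of_all _ fun ρ => ?_
    rw [Real.norm_eq_abs, _root_.abs_mul]
    have h1 := gbound ρ
    have h2 : |Real.cos (α * ρ)| ≤ 1 := Real.abs_cos_le_one _
    have h3 : (0:ℝ) < 1 + ρ ^ 2 := by positivity
    calc |g ρ| * |Real.cos (α * ρ)| ≤ (4 / (1 + ρ ^ 2)) * 1 := by
          gcongr
    _ = 4 * (1 + ρ ^ 2)⁻¹ := by rw [div_eq_mul_inv]; ring

end SinCosKernelAux

/-- for `|α| ≠ 1`, the improper integral
`∫₀^∞ (sin ρ/ρ³ − cos ρ/ρ²) cos(αρ) dρ` converges, to `(π/4)(1 − α²)` if `|α| < 1` and to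
`0` if `|α| > 1`. -/
theorem integral_sin_cos_kernel (α : ℝ) (hα : |α| ≠ 1) :
    Tendsto (fun T : ℝ =>
        ∫ ρ in (0:ℝ)..T, (Real.sin ρ / ρ ^ 3 - Real.cos ρ / ρ ^ 2) * Real.cos (α * ρ))
      atTop
      (nhds (if |α| < 1 then Real.pi / 4 * (1 - α ^ 2) else 0)) := by
  have heq : (fun ρ : ℝ => (Real.sin ρ / ρ ^ 3 - Real.cos ρ / ρ ^ 2) * Real.cos (α * ρ))
      = fun ρ : ℝ => SinCosKernelAux.g ρ * Real.cos (α * ρ) := rfl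
  have htend := intervalIntegral_tendsto_integral_Ioi 0
    (SinCosKernelAux.integrableOn_kernel α) tendsto_id
  have hval : ∫ ρ in Set.Ioi (0:ℝ), SinCosKernelAux.g ρ * Real.cos (α * ρ)
      = if |α| < 1 then Real.pi / 4 * (1 - α ^ 2) else 0 := by
    rw [SinCosKernelAux.key α]
    rcases lt_or_gt_of_ne hα with hlt | hgt
    · rw [if_pos hlt, max_eq_right (by nlinarith [sq_abs α, abs_nonneg α])]
    · rw [if_neg (by push_neg; linarith),
        max_eq_left (by nlinarith [sq_abs α, abs_nonneg α])]
      ring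
  rw [hval] at htend
  simpa [heq] using htend

end
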